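/- Let N ≥ 1, let w_1,…,w_N, u_1,…,u_N ∈ ℝ and σ² ∈ ℝ, and define the moments M_j := Σ_{i=1}^N w_i·Δ_j(u_i, σ²) for j ∈ ℕ. Then for every j ∈ ℕ, the pure power sums are recovered by the inversion formula Σ_{i=1}^N w_i·u_i^j = Σ_{k=0}^{⌊j/2⌋} (j!/(k!(j−2k)!))·(−σ²/2)^k·M_{j−2k}. -/

import Mathlib

noncomputable def DeltaFun (j : ℕ) (u t : ℝ) : ℝ :=
  ∑ k ∈ Finset.range (j/2 + 1),
    ((j.factorial : ℝ) / ((k.factorial : ℝ) * ((j - 2*k).factorial : ℝ)))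
      * (t/2)^k * u^(j - 2*k)

open Finset

lemma key (j : ℕ) (u t : ℝ) :
    ∑ k ∈ range (j/2 + 1),
      ((j.factorial : ℝ) / ((k.factorial : ℝ) * ((j - 2*k).factorial : ℝ)))
        * (-t/2)^k * DeltaFun (j - 2*k) u t = u^j := by
  have step1 :
      ∑ k ∈ range (j/2 + 1),
        ((j.factorial : ℝ) / ((k.factorial : ℝ) * ((j - 2*k).factorial : ℝ)))
          * (-t/2)^k * DeltaFun (j - 2*k) u t
      = ∑ p ∈ (range (j/2+1)).sigma (fun k => range ((j-2*k)/2 + 1)),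
          ((j.factorial : ℝ) / ((p.1.factorial : ℝ) * (p.2.factorial : ℝ)
              * ((j - 2*(p.1+p.2)).factorial : ℝ)))
            * (-t/2)^p.1 * (t/2)^p.2 * u^(j - 2*(p.1+p.2)) := by
    rw [Finset.sum_sigma]
    apply Finset.sum_congr rfl
    intro k hk
    simp only [DeltaFun, Finset.mul_sum]
    apply Finset.sum_congr rfl
    intro m hm
    simp only [Finset.mem_range, Nat.lt_succ_iff] at hk hm
    have h2k : 2*k ≤ j := by omega
    have h2m : 2*m ≤ j - 2*k := by
      have := (Nat.le_div_iff_mul_le (by norm_num : 0 < 2)).1 hm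
      omega
    have hsub : (j - 2*k) - 2*m = j - 2*(k+m) := by omega
    rw [hsub]
    have f1 : ((j-2*k).factorial : ℝ) ≠ 0 := Nat.cast_ne_zero.2 (j-2*k).factorial_ne_zero
    have f2 : (k.factorial : ℝ) ≠ 0 := Nat.cast_ne_zero.2 k.factorial_ne_zero
    have f3 : (m.factorial : ℝ) ≠ 0 := Nat.cast_ne_zero.2 m.factorial_ne_zero
    have f4 : ((j-2*(k+m)).factorial : ℝ) ≠ 0 := Nat.cast_ne_zero.2 (j-2*(k+m)).factorial_ne_zero
    field_simp
  rw [step1]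
  have step2 :
      ∑ p ∈ (range (j/2+1)).sigma (fun k => range ((j-2*k)/2 + 1)),
          ((j.factorial : ℝ) / ((p.1.factorial : ℝ) * (p.2.factorial : ℝ)
              * ((j - 2*(p.1+p.2)).factorial : ℝ)))
            * (-t/2)^p.1 * (t/2)^p.2 * u^(j - 2*(p.1+p.2))
      = ∑ q ∈ (range (j/2+1)).sigma (fun n => range (n + 1)),
          ((j.factorial : ℝ) / ((q.2.factorial : ℝ) * ((q.1-q.2).factorial : ℝ)
              * ((j - 2*q.1).factorial : ℝ)))
            * (-t/2)^q.2 * (t/2)^(q.1-q.2) * u^(j - 2*q.1) := by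
    apply Finset.sum_nbij' (i := fun p => ⟨p.1 + p.2, p.1⟩)
      (j := fun q => ⟨q.2, q.1 - q.2⟩)
    · rintro ⟨k, m⟩ hp
      simp only [Finset.mem_sigma, Finset.mem_range, Nat.lt_succ_iff] at hp ⊢
      have h1 := hp.1
      have h2 := (Nat.le_div_iff_mul_le (by norm_num : 0 < 2)).1 hp.2
      have h0 := (Nat.le_div_iff_mul_le (by norm_num : 0 < 2)).1 hp.1
      constructor
      · exact (Nat.le_div_iff_mul_le (by norm_num : 0 < 2)).2 (by omega)
      · omega
    · rintro ⟨n, k⟩ hq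
      simp only [Finset.mem_sigma, Finset.mem_range, Nat.lt_succ_iff] at hq ⊢
      have h0 := (Nat.le_div_iff_mul_le (by norm_num : 0 < 2)).1 hq.1
      constructor
      · exact (Nat.le_div_iff_mul_le (by norm_num : 0 < 2)).2 (by omega)
      · exact (Nat.le_div_iff_mul_le (by norm_num : 0 < 2)).2 (by omega)
    · rintro ⟨k, m⟩ hp
      simp
    · rintro ⟨n, k⟩ hq
      simp only [Finset.mem_sigma, Finset.mem_range, Nat.lt_succ_iff] at hq
      have : k + (n - k) = n := by omega
      simp [this]
    · rintro ⟨k, m⟩ hp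
      simp
  rw [step2, Finset.sum_sigma]
  have step3 : ∀ n ∈ range (j/2+1),
      ∑ k ∈ range (n+1),
        ((j.factorial : ℝ) / ((k.factorial : ℝ) * ((n-k).factorial : ℝ)
            * ((j - 2*n).factorial : ℝ)))
          * (-t/2)^k * (t/2)^(n-k) * u^(j - 2*n)
      = ((j.factorial : ℝ) / ((n.factorial : ℝ) * ((j - 2*n).factorial : ℝ)))
          * (0:ℝ)^n * u^(j-2*n) := by
    intro n hn
    have hz : (0:ℝ) = (-t/2) + (t/2) := by ring
    rw [hz, add_pow, Finset.mul_sum, Finset.sum_mul]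
    apply Finset.sum_congr rfl
    intro k hk
    simp only [Finset.mem_range, Nat.lt_succ_iff] at hk
    rw [Nat.cast_choose ℝ hk]
    have f2 : (k.factorial : ℝ) ≠ 0 := Nat.cast_ne_zero.2 k.factorial_ne_zero
    have f3 : ((n-k).factorial : ℝ) ≠ 0 := Nat.cast_ne_zero.2 (n-k).factorial_ne_zero
    have f4 : ((j-2*n).factorial : ℝ) ≠ 0 := Nat.cast_ne_zero.2 (j-2*n).factorial_ne_zero
    have f5 : (n.factorial : ℝ) ≠ 0 := Nat.cast_ne_zero.2 n.factorial_ne_zero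
    field_simp
  rw [Finset.sum_congr rfl step3]
  rw [Finset.sum_eq_single 0]
  · have : (j.factorial : ℝ) ≠ 0 := Nat.cast_ne_zero.2 j.factorial_ne_zero
    simp [div_self this]
  · intro n _ hn
    simp [zero_pow hn]
  · intro h
    simp at h

/-- Inversion formula: the power sums `Σᵢ wᵢ uᵢ^j` are recovered from the moments
`M_j = Σᵢ wᵢ Δ_j(uᵢ,σ²)` by
`Σᵢ wᵢ uᵢ^j = Σ_{k=0}^{⌊j/2⌋} (j!/(k!(j−2k)!))·(−σ²/2)^k·M_{j−2k}`. -/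
theorem stmt14 (N : ℕ) (hN : 1 ≤ N) (w u : Fin N → ℝ) (σ2 : ℝ) (j : ℕ) :
    ∑ i, w i * (u i)^j
      = ∑ k ∈ Finset.range (j/2 + 1),
          ((j.factorial : ℝ) / ((k.factorial : ℝ) * ((j - 2*k).factorial : ℝ)))
            * (-σ2/2)^k * (∑ i, w i * DeltaFun (j - 2*k) (u i) σ2) := by
  have lhs_eq : ∑ i, w i * (u i)^j
      = ∑ i : Fin N, ∑ k ∈ Finset.range (j/2 + 1),
          w i * (((j.factorial : ℝ) / ((k.factorial : ℝ) * ((j - 2*k).factorial : ℝ)))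
            * (-σ2/2)^k * DeltaFun (j - 2*k) (u i) σ2) := by
    apply Finset.sum_congr rfl
    intro i _
    rw [← Finset.mul_sum, key j (u i) σ2]
  rw [lhs_eq, Finset.sum_comm]
  apply Finset.sum_congr rfl
  intro k _
  rw [Finset.mul_sum]
  apply Finset.sum_congr rfl
  intro i _
  ring
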